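/- arXiv:2012.06379 — 2 statements merged into one kernel-verified Lean document; each statement's English description precedes it below -/
import Mathlib

section
/- Let x be a word over {1,2}, with g(x,m) defined as g(x,m) = β_0 + ⋯ + β_{m−1} + 2m − 1 from the decomposition x = 1^{β_k} 2 1^{β_{k−1}} 2 ⋯ 2 1^{β_0} (k = number of 2s). Suppose x = α_1⋯α_a α_{a+1}⋯α_A with |α_{a+1}⋯α_A| = i (the suffix has digit sum i). Then ∏_{j=1}^{k}(g(x,j) − i) = [∏_{j ∈ {1,…,|x|} \ {i}} (j − i)] · 1/[(α_A − i)(α_A+α_{A−1} − i)⋯(α_A+⋯+α_{a+2} − i)] · 1/[(α_A+⋯+α_a − i)(α_A+⋯+α_{a−1} − i)⋯(α_A+⋯+α_1 − i)]. -/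
def takeBefore2 : ℕ → List ℕ → List ℕ
  | _, [] => []
  | m, a :: t =>
      if a = 2 then (if m ≤ 1 then [] else a :: takeBefore2 (m - 1) t)
      else a :: takeBefore2 m t

/-- `gval x m` is `g(x,m) = β₀ + ⋯ + β_{m-1} + 2m - 1`, computed as one plus the digit
sum of the part of `x` lying strictly to the right of the `m`-th `2` counted from the right. -/
def gval (x : List ℕ) (m : ℕ) : ℕ := 1 + (takeBefore2 m x.reverse).sum

lemma tb_cons2 (m : ℕ) (t : List ℕ) :
    takeBefore2 m (2 :: t) = if m ≤ 1 then [] else 2 :: takeBefore2 (m-1) t := by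
  simp [takeBefore2]

lemma tb_cons (b m : ℕ) (t : List ℕ) (hb : b ≠ 2) :
    takeBefore2 m (b :: t) = b :: takeBefore2 m t := by
  simp [takeBefore2, hb]

lemma tb_append (l r : List ℕ) (m : ℕ) (h1 : 1 ≤ m) (h2 : m ≤ l.count 2) :
    takeBefore2 m (l ++ r) = takeBefore2 m l := by
  induction l generalizing m with
  | nil => simp at h2; omega
  | cons b t ih =>
    by_cases hb : b = 2
    · subst hb
      rw [List.cons_append, tb_cons2, tb_cons2]
      by_cases hm : m ≤ 1
      · simp [hm]
      · rw [if_neg hm, if_neg hm,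
          ih (m-1) (by omega) (by simp [List.count_cons] at h2 ⊢; omega)]
    · rw [List.cons_append, tb_cons b m _ hb, tb_cons b m _ hb,
        ih m h1 (by simp [List.count_cons, hb] at h2 ⊢; omega)]

lemma tb_last (l : List ℕ) : takeBefore2 (l.count 2 + 1) (l ++ [2]) = l := by
  induction l with
  | nil => simp [takeBefore2]
  | cons b t ih =>
    by_cases hb : b = 2
    · subst hb
      rw [List.cons_append, tb_cons2, if_neg (by simp [List.count_cons]; try omega)]
      have hc : (2 :: t).count 2 = t.count 2 + 1 := by simp [List.count_cons]
      rw [hc]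
      simpa using ih
    · rw [List.cons_append, tb_cons b _ _ hb]
      have hc : (b :: t).count 2 = t.count 2 := by simp [List.count_cons, hb]
      rw [hc, ih]

lemma gval_cons (d : ℕ) (y : List ℕ) (j : ℕ) (h1 : 1 ≤ j) (h2 : j ≤ y.count 2) :
    gval (d :: y) j = gval y j := by
  unfold gval
  rw [List.reverse_cons, tb_append _ _ j h1 (by rwa [List.count_reverse])]

lemma gval_two (y : List ℕ) : gval (2 :: y) (y.count 2 + 1) = 1 + y.sum := by
  unfold gval
  rw [List.reverse_cons, ← List.count_reverse (a := 2) (l := y), tb_last, List.sum_reverse]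

lemma prodP {R : Type*} [CommRing R] (c : R) :
    ∀ (x : List ℕ), (∀ d ∈ x, d = 1 ∨ d = 2) →
    (∏ j ∈ Finset.Icc 1 (x.count 2), ((gval x j : R) - c)) *
      (∏ t ∈ Finset.range x.length, (((x.drop t).sum : R) - c)) =
    ∏ v ∈ Finset.Icc 1 x.sum, ((v : R) - c) := by
  intro x
  induction x with
  | nil => intro _; simp
  | cons d y ih =>
    intro hx
    have hy : ∀ e ∈ y, e = 1 ∨ e = 2 := fun e he => hx e (List.mem_cons_of_mem _ he)
    have IH := ih hy
    have hlen : (d :: y).length = y.length + 1 := rfl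
    rw [hlen, Finset.prod_range_succ']
    have hdrop : ∀ t, ((d :: y).drop (t+1)) = y.drop t := fun t => rfl
    simp only [hdrop, List.drop_zero]
    rcases hx d (List.mem_cons_self (a := d) (l := y)) with hd | hd <;> subst hd
    · have hcnt : (1 :: y).count 2 = y.count 2 := by simp [List.count_cons]
      have hg : (∏ j ∈ Finset.Icc 1 ((1 :: y).count 2), ((gval (1 :: y) j : R) - c)) =
          ∏ j ∈ Finset.Icc 1 (y.count 2), ((gval y j : R) - c) := by
        rw [hcnt]
        exact Finset.prod_congr rfl fun j hj => by
          rw [gval_cons _ _ j (Finset.mem_Icc.mp hj).1 (Finset.mem_Icc.mp hj).2]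
      rw [hg]
      have hsum : (1 :: y).sum = y.sum + 1 := by simp [List.sum_cons]; omega
      rw [hsum, Finset.prod_Icc_succ_top (by omega), ← IH]
      push_cast
      ring
    · have hcnt : (2 :: y).count 2 = y.count 2 + 1 := by simp [List.count_cons]
      have hg : (∏ j ∈ Finset.Icc 1 ((2 :: y).count 2), ((gval (2 :: y) j : R) - c)) =
          (∏ j ∈ Finset.Icc 1 (y.count 2), ((gval y j : R) - c)) * (((1 + y.sum : ℕ) : R) - c) := by
        rw [hcnt, Finset.prod_Icc_succ_top (by omega), gval_two]
        congr 1
        exact Finset.prod_congr rfl fun j hj => by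
          rw [gval_cons _ _ j (Finset.mem_Icc.mp hj).1 (Finset.mem_Icc.mp hj).2]
      rw [hg]
      have hsum : (2 :: y).sum = (y.sum + 1) + 1 := by simp [List.sum_cons]; omega
      rw [hsum, Finset.prod_Icc_succ_top (by omega), Finset.prod_Icc_succ_top (by omega), ← IH]
      push_cast
      ring

lemma length_le_sum (l : List ℕ) (h : ∀ d ∈ l, 1 ≤ d) : l.length ≤ l.sum := by
  induction l with
  | nil => simp
  | cons b t ih =>
    simp only [List.length_cons, List.sum_cons]
    have := h b (List.mem_cons_self (a := b) (l := t))
    have := ih fun e he => h e (List.mem_cons_of_mem _ he)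
    omega

lemma drop_sum_lt (x : List ℕ) (hx : ∀ d ∈ x, 1 ≤ d) {s t : ℕ} (h : s < t)
    (ht : t ≤ x.length) : (x.drop t).sum < (x.drop s).sum := by
  have h1 : (x.drop s).take (t - s) ++ (x.drop s).drop (t - s) = x.drop s :=
    List.take_append_drop _ _
  have h2 : (x.drop s).drop (t - s) = x.drop t := by
    rw [List.drop_drop]
    congr 1
    omega
  have h3 : ((x.drop s).take (t - s)).length = t - s := by
    rw [List.length_take, List.length_drop]
    omega
  have h4 : 1 ≤ ((x.drop s).take (t - s)).sum := by
    have : ((x.drop s).take (t - s)).length ≤ ((x.drop s).take (t - s)).sum := by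
      apply length_le_sum
      intro d hd
      exact hx d (List.mem_of_mem_drop (List.mem_of_mem_take hd))
    omega
  have := congrArg List.sum h1
  rw [List.sum_append, h2] at this
  omega

theorem stmt5 (x : List ℕ) (hx : ∀ d ∈ x, d = 1 ∨ d = 2) (a i : ℕ)
    (ha : a ≤ x.length) (hsum : (x.drop a).sum = i) :
    (∏ j ∈ Finset.Icc 1 (x.count 2), ((gval x j : ℚ) - (i : ℚ))) =
      (∏ j ∈ (Finset.Icc 1 x.sum).erase i, ((j : ℚ) - (i : ℚ))) *
        (∏ t ∈ Finset.Ico (a + 1) x.length, (((x.drop t).sum : ℚ) - (i : ℚ)))⁻¹ *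
        (∏ t ∈ Finset.range a, (((x.drop t).sum : ℚ) - (i : ℚ)))⁻¹ := by
  have hx1 : ∀ d ∈ x, 1 ≤ d := fun d hd => by rcases hx d hd with h | h <;> omega
  by_cases haL : a = x.length
  · -- i = 0
    have hi : i = 0 := by
      rw [← hsum, haL, List.drop_length]; rfl
    subst hi
    have Pq := prodP (R := ℚ) ((0 : ℕ) : ℚ) x hx
    have hB : (∏ t ∈ Finset.range x.length, (((x.drop t).sum : ℚ) - ((0:ℕ) : ℚ))) ≠ 0 := by
      apply Finset.prod_ne_zero_iff.mpr
      intro t ht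
      have htL : t < x.length := Finset.mem_range.mp ht
      have h1 : 1 ≤ (x.drop t).sum := by
        have hl := length_le_sum (x.drop t) (fun d hd => hx1 d (List.mem_of_mem_drop hd))
        rw [List.length_drop] at hl
        omega
      have : ((x.drop t).sum : ℚ) ≠ ((0:ℕ) : ℚ) := by
        exact_mod_cast (by omega : (x.drop t).sum ≠ 0)
      exact sub_ne_zero.mpr this
    have hIco : Finset.Ico (a + 1) x.length = ∅ := Finset.Ico_eq_empty (by omega)
    have herase : (Finset.Icc 1 x.sum).erase 0 = Finset.Icc 1 x.sum :=
      Finset.erase_eq_of_notMem (by simp)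
    rw [hIco, herase, haL]
    simp only [Finset.prod_empty, inv_one, mul_one]
    rw [eq_comm, mul_inv_eq_iff_eq_mul₀ hB]
    rw [← Pq]
  · have haL' : a < x.length := lt_of_le_of_ne ha haL
    have hmema : a ∈ Finset.range x.length := Finset.mem_range.mpr haL'
    have hi1 : 1 ≤ i := by
      rw [← hsum]
      have hl := length_le_sum (x.drop a) (fun d hd => hx1 d (List.mem_of_mem_drop hd))
      rw [List.length_drop] at hl
      omega
    have hi2 : i ≤ x.sum := by
      have h := List.sum_take_add_sum_drop x a
      rw [hsum] at h
      omega
    have hmemi : i ∈ Finset.Icc 1 x.sum := Finset.mem_Icc.mpr ⟨hi1, hi2⟩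
    have P := prodP (R := Polynomial ℚ) Polynomial.X x hx
    rw [← Finset.mul_prod_erase _ _ hmema, ← Finset.mul_prod_erase _ _ hmemi, hsum] at P
    have hne : ((i : Polynomial ℚ) - Polynomial.X) ≠ 0 := by
      intro h
      have h2 := congrArg (Polynomial.eval ((i : ℚ) + 1)) h
      simp [Polynomial.eval_sub, Polynomial.eval_natCast, Polynomial.eval_X] at h2
    have key : (∏ j ∈ Finset.Icc 1 (x.count 2), ((gval x j : Polynomial ℚ) - Polynomial.X)) *
        (∏ t ∈ (Finset.range x.length).erase a,
          (((x.drop t).sum : Polynomial ℚ) - Polynomial.X)) =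
        ∏ v ∈ (Finset.Icc 1 x.sum).erase i, ((v : Polynomial ℚ) - Polynomial.X) := by
      apply mul_left_cancel₀ hne
      linear_combination P
    have keyQ := congrArg (Polynomial.eval (i : ℚ)) key
    simp only [Polynomial.eval_mul, Polynomial.eval_prod, Polynomial.eval_sub,
      Polynomial.eval_natCast, Polynomial.eval_X] at keyQ
    have hsplit : (Finset.range x.length).erase a =
        Finset.range a ∪ Finset.Ico (a + 1) x.length := by
      ext t
      simp only [Finset.mem_erase, Finset.mem_range, Finset.mem_union, Finset.mem_Ico]
      omega
    have hdisj : Disjoint (Finset.range a) (Finset.Ico (a + 1) x.length) := by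
      rw [Finset.disjoint_left]
      intro t h1 h2
      simp only [Finset.mem_range] at h1
      simp only [Finset.mem_Ico] at h2
      omega
    rw [hsplit, Finset.prod_union hdisj] at keyQ
    have h1 : (∏ t ∈ Finset.range a, (((x.drop t).sum : ℚ) - (i : ℚ))) ≠ 0 := by
      apply Finset.prod_ne_zero_iff.mpr
      intro t ht
      have htL : t < a := Finset.mem_range.mp ht
      have hlt : i < (x.drop t).sum := by
        rw [← hsum]
        exact drop_sum_lt x hx1 htL ha
      apply sub_ne_zero.mpr
      exact_mod_cast Nat.ne_of_gt hlt
    have h2 : (∏ t ∈ Finset.Ico (a + 1) x.length, (((x.drop t).sum : ℚ) - (i : ℚ))) ≠ 0 := by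
      apply Finset.prod_ne_zero_iff.mpr
      intro t ht
      have htm := Finset.mem_Ico.mp ht
      have hlt : (x.drop t).sum < i := by
        rw [← hsum]
        exact drop_sum_lt x hx1 (by omega) (by omega)
      apply sub_ne_zero.mpr
      exact_mod_cast Nat.ne_of_lt hlt
    rw [← keyQ, ← mul_assoc, mul_inv_cancel_right₀ h2, mul_inv_cancel_right₀ h1]
end

section
/- For natural numbers Y ≥ 1 and S ≥ 1, Ξ(0,Y,S) = Σ_{e=1}^{Y+1} e · Ξ(0,e,S−1), where Ξ(0,Y,S) = Σ_{Δ ∈ Ω(0,Y,S)} ∏_{j=1}^{S} e(Δ,j). -/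
/-- The heights attained immediately after each up-step of a trajectory
(listed in order of occurrence): `e(Δ,1), …, e(Δ,S)`. -/
def upsList (L : List ℕ) : List ℕ :=
  ((L.zip L.tail).filter (fun p => p.2 == p.1 + 1)).map Prod.snd

/-- `L` is a ±1-step trajectory (of nonnegative integers) from `Y` to `X`. -/
def IsTraj (Y X : ℕ) (L : List ℕ) : Prop :=
  L.head? = some Y ∧ L.getLast? = some X ∧
    L.Chain' (fun a b => b = a + 1 ∨ a = b + 1)

/-- `Ω(X,Y,S)`: nonnegative ±1-step trajectories from `Y` to `X` with exactly `S` up-steps. -/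
def Omega (X Y S : ℕ) : Set (List ℕ) :=
  {L | IsTraj Y X L ∧ (upsList L).length = S}

/-- `Ξ(X,Y,S) = Σ_{Δ ∈ Ω(X,Y,S)} ∏_{j=1}^{S} e(Δ,j)`. -/
noncomputable def XiZ (X Y S : ℕ) : ℤ :=
  ∑ᶠ L ∈ Omega X Y S, ((upsList L).prod : ℤ)

@[simp] lemma upsList_nil : upsList [] = [] := rfl
@[simp] lemma upsList_singleton (x : ℕ) : upsList [x] = [] := rfl

lemma upsList_cons_cons (x y : ℕ) (L : List ℕ) :
    upsList (x :: y :: L) = (if y = x + 1 then [y] else []) ++ upsList (y :: L) := by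
  simp only [upsList, List.tail, List.zip_cons_cons, List.filter_cons, beq_iff_eq]
  split_ifs with h <;> simp

/-- descending list `[b+k, b+k-1, ..., b]` -/
def down : ℕ → ℕ → List ℕ
  | 0, b => [b]
  | k+1, b => (b + k + 1) :: down k b

@[simp] lemma down_append_head (k b : ℕ) (M : List ℕ) :
    (down k b ++ M).head? = some (b + k) := by
  cases k <;> simp [down] <;> omega

@[simp] lemma down_head (k b : ℕ) : (down k b).head? = some (b + k) := by
  cases k <;> simp [down] <;> omega

lemma upsList_down_append (k e : ℕ) (he : 1 ≤ e) (M : List ℕ) (hM : M.head? = some e) :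
    upsList (down k (e - 1) ++ M) = e :: upsList M := by
  induction k with
  | zero =>
    cases M with
    | nil => simp at hM
    | cons a T =>
      simp only [List.head?_cons, Option.some.injEq] at hM
      subst hM
      simp only [down, List.cons_append, List.nil_append, upsList_cons_cons]
      rw [if_pos (by omega)]
      simp
  | succ k ih =>
    have : down (k+1) (e-1) ++ M = (e - 1 + k + 1) :: (down k (e-1) ++ M) := by
      simp [down]
    rw [this]
    obtain ⟨T, hT⟩ : ∃ T, down k (e-1) ++ M = (e - 1 + k) :: T := by
      cases h : down k (e-1) ++ M with
      | nil => have := down_append_head k (e-1) M; rw [h] at this; simp at this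
      | cons a T =>
        have := down_append_head k (e-1) M; rw [h] at this
        simp only [List.head?_cons, Option.some.injEq] at this
        exact ⟨T, by rw [this]⟩
    rw [hT, upsList_cons_cons, if_neg (by omega), List.nil_append, ← hT, ih]

@[simp] lemma down_getLast (k b : ℕ) : (down k b).getLast? = some b := by
  induction k with
  | zero => rfl
  | succ k ih =>
    rw [show down (k+1) b = (b + k + 1) :: down k b from rfl]
    cases h : down k b with
    | nil => rw [h] at ih; simp at ih
    | cons a t => rw [h] at ih; rw [List.getLast?_cons_cons]; exact ih

lemma down_chain' (k b : ℕ) : (down k b).Chain' (fun a c => c = a + 1 ∨ a = c + 1) := by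
  induction k with
  | zero => exact List.isChain_singleton _
  | succ k ih =>
    have h : down (k+1) b = (b + k + 1) :: down k b := rfl
    rw [h, List.Chain', List.isChain_cons]
    refine ⟨?_, ih⟩
    intro y hy
    rw [down_head] at hy
    simp only [Option.mem_def, Option.some.injEq] at hy
    omega

lemma isTraj_down_append (k e : ℕ) (he : 1 ≤ e) (M : List ℕ) (hM : IsTraj e 0 M) :
    IsTraj (e - 1 + k) 0 (down k (e - 1) ++ M) := by
  obtain ⟨h1, h2, h3⟩ := hM
  refine ⟨by simp, ?_, ?_⟩
  · rw [List.getLast?_append, h2]; rfl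
  · rw [List.Chain', List.isChain_append]
    refine ⟨down_chain' _ _, h3, ?_⟩
    intro x hx y hy
    rw [down_getLast] at hx
    rw [h1] at hy
    simp only [Option.mem_def, Option.some.injEq] at hx hy
    omega

lemma decomp (L : List ℕ) : ∀ Y, IsTraj Y 0 L → 1 ≤ (upsList L).length →
    ∃ e M, 1 ≤ e ∧ e ≤ Y + 1 ∧ IsTraj e 0 M ∧ upsList L = e :: upsList M ∧
      L = down (Y + 1 - e) (e - 1) ++ M := by
  induction L with
  | nil => intro Y h; exact absurd h.1 (by simp)
  | cons x T ih =>
    intro Y h hS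
    obtain ⟨h1, h2, h3⟩ := h
    simp only [List.head?_cons, Option.some.injEq] at h1
    subst h1
    cases T with
    | nil =>
      simp only [upsList_singleton, List.length_nil] at hS
      omega
    | cons y T' =>
      rw [List.Chain', List.isChain_cons_cons] at h3
      rcases h3.1 with hup | hdown
      · -- first step is up : e = Y + 1
        refine ⟨x + 1, y :: T', by omega, by omega, ⟨by simp [hup], ?_, h3.2⟩, ?_, ?_⟩
        · rw [← h2, List.getLast?_cons_cons]
        · rw [upsList_cons_cons, if_pos hup, hup]; rfl
        · subst hup
          rw [show x + 1 - (x + 1) = 0 from by omega, show x + 1 - 1 = x from rfl]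
          rfl
      · -- first step is down : recurse
        have hT : IsTraj y 0 (y :: T') :=
          ⟨rfl, by rw [← h2, List.getLast?_cons_cons], h3.2⟩
        have hup' : upsList (x :: y :: T') = upsList (y :: T') := by
          rw [upsList_cons_cons, if_neg (by omega), List.nil_append]
        rw [hup'] at hS ⊢
        obtain ⟨e, M, he1, he2, hM, hups, hdec⟩ := ih y hT hS
        refine ⟨e, M, he1, by omega, hM, hups, ?_⟩
        have hk : x + 1 - e = (y + 1 - e) + 1 := by omega
        rw [hk]
        have : down ((y + 1 - e) + 1) (e - 1) = (e - 1 + (y + 1 - e) + 1) :: down (y + 1 - e) (e - 1) := rfl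
        rw [this, List.cons_append, ← hdec]
        congr 1
        omega

lemma traj_length_le (L : List ℕ) : ∀ Y, IsTraj Y 0 L →
    L.length ≤ Y + 2 * (upsList L).length + 1 := by
  induction L with
  | nil => intro Y h; exact absurd h.1 (by simp)
  | cons x T ih =>
    intro Y h
    obtain ⟨h1, h2, h3⟩ := h
    simp only [List.head?_cons, Option.some.injEq] at h1
    subst h1
    cases T with
    | nil => simp
    | cons y T' =>
      rw [List.Chain', List.isChain_cons_cons] at h3
      have hT : IsTraj y 0 (y :: T') :=
        ⟨rfl, by rw [← h2, List.getLast?_cons_cons], h3.2⟩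
      have := ih y hT
      rcases h3.1 with hup | hdown
      · rw [upsList_cons_cons, if_pos hup]
        simp only [List.length_cons, List.singleton_append, List.length_cons] at *
        omega
      · rw [upsList_cons_cons, if_neg (by omega), List.nil_append]
        simp only [List.length_cons] at *
        omega

lemma traj_mem_lt (L : List ℕ) : ∀ Y X, IsTraj Y X L → ∀ x ∈ L, x < Y + L.length := by
  induction L with
  | nil => intro Y X h; exact absurd h.1 (by simp)
  | cons a T ih =>
    intro Y X h x hx
    obtain ⟨h1, h2, h3⟩ := h
    simp only [List.head?_cons, Option.some.injEq] at h1
    subst h1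
    rw [List.mem_cons] at hx
    rcases hx with rfl | hx
    · simp only [List.length_cons]; omega
    · cases T with
      | nil => simp at hx
      | cons y T' =>
        rw [List.Chain', List.isChain_cons_cons] at h3
        have hT : IsTraj y X (y :: T') :=
          ⟨rfl, by rw [← h2, List.getLast?_cons_cons], h3.2⟩
        have := ih y X hT x hx
        simp only [List.length_cons] at *
        omega

lemma finite_bdd (m n : ℕ) : {L : List ℕ | L.length ≤ n ∧ ∀ x ∈ L, x < m}.Finite := by
  have h := List.finite_length_le (Fin m) n
  apply (h.image (List.map Fin.val)).subset
  rintro L ⟨hlen, hmem⟩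
  refine ⟨L.pmap (fun x h => (⟨x, h⟩ : Fin m)) hmem, by simpa using hlen, ?_⟩
  simp [List.map_pmap]

lemma omega_finite (Y S : ℕ) : (Omega 0 Y S).Finite := by
  apply (finite_bdd (Y + (Y + 2 * S + 1)) (Y + 2 * S + 1)).subset
  rintro L ⟨h1, h2⟩
  have hl := traj_length_le L Y h1
  rw [h2] at hl
  exact ⟨hl, fun x hx => lt_of_lt_of_le (traj_mem_lt L Y 0 h1 x hx) (by omega)⟩

lemma head_of_traj {e X : ℕ} {M : List ℕ} (h : IsTraj e X M) : M.head? = some e := h.1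

lemma omega_eq (Y S : ℕ) (hY : 1 ≤ Y) (hS : 1 ≤ S) :
    Omega 0 Y S = ⋃ e ∈ (↑(Finset.Icc 1 (Y + 1)) : Set ℕ),
      (fun M => down (Y + 1 - e) (e - 1) ++ M) '' Omega 0 e (S - 1) := by
  ext L
  simp only [Set.mem_iUnion, Finset.mem_coe, Finset.mem_Icc, Set.mem_image]
  constructor
  · rintro ⟨h1, h2⟩
    obtain ⟨e, M, he1, he2, hM, hups, hdec⟩ := decomp L Y h1 (by omega)
    refine ⟨e, ⟨he1, he2⟩, M, ⟨hM, ?_⟩, hdec.symm⟩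
    rw [hups] at h2
    simp only [List.length_cons] at h2
    omega
  · rintro ⟨e, ⟨he1, he2⟩, M, ⟨hM1, hM2⟩, rfl⟩
    constructor
    · have := isTraj_down_append (Y + 1 - e) e he1 M hM1
      rwa [show e - 1 + (Y + 1 - e) = Y from by omega] at this
    · rw [upsList_down_append _ e he1 M (head_of_traj hM1)]
      simp only [List.length_cons]
      omega


theorem stmt12 (Y S : ℕ) (hY : 1 ≤ Y) (hS : 1 ≤ S) :
    XiZ 0 Y S = ∑ e ∈ Finset.Icc 1 (Y + 1), (e : ℤ) * XiZ 0 e (S - 1) := by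
  rw [XiZ, omega_eq Y S hY hS]
  rw [finsum_mem_biUnion]
  · rw [finsum_mem_coe_finset]
    apply Finset.sum_congr rfl
    intro e he
    rw [Finset.mem_Icc] at he
    rw [finsum_mem_image (fun M _ N _ h => List.append_cancel_left h)]
    have hcong : ∀ M ∈ Omega 0 e (S - 1),
        ((upsList (down (Y + 1 - e) (e - 1) ++ M)).prod : ℤ)
          = (e : ℤ) * ((upsList M).prod : ℤ) := by
      intro M hM
      rw [upsList_down_append _ e he.1 M (head_of_traj hM.1)]
      push_cast [List.prod_cons]
      ring
    rw [finsum_mem_congr rfl hcong]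
    rw [XiZ, ← (omega_finite e (S-1)).coe_toFinset, finsum_mem_coe_finset,
      finsum_mem_coe_finset, Finset.mul_sum]
  · -- pairwise disjoint
    intro e he e' he' hne
    simp only [Function.onFun]
    rw [Set.disjoint_left]
    rintro L ⟨M, hM, rfl⟩ ⟨M', hM', hEq⟩
    apply hne
    rw [Finset.mem_coe, Finset.mem_Icc] at he he'
    have h1 := upsList_down_append (Y + 1 - e) e he.1 M (head_of_traj hM.1)
    have h2 := upsList_down_append (Y + 1 - e') e' he'.1 M' (head_of_traj hM'.1)
    simp only at hEq
    rw [hEq, h1] at h2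
    exact ((List.cons_eq_cons.mp h2.symm).1).symm
  · exact (Finset.Icc 1 (Y + 1)).finite_toSet
  · intro e _
    exact (omega_finite e (S-1)).image _
end
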